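/- A word x satisfies x·x ∈ ↓(V_n³) if and only if x is a subword of some conjugate of V_n, where V_n = a₁⋯a_n has pairwise distinct letters. -/

import Mathlib

def dcl {α : Type*} (L : Set (List α)) : Set (List α) :=
  {x | ∃ y ∈ L, x.Sublist y}

private lemma pair_lt {α : Type*} [DecidableEq α] {a b : α} {V : List α} (hV : V.Nodup)
    (h : List.Sublist [a, b] V) : V.idxOf a < V.idxOf b := by
  induction V with
  | nil => simp at h
  | cons c V ih =>
    rcases List.nodup_cons.mp hV with ⟨hc, hV'⟩
    cases h with
    | cons _ h' =>
      have ha : a ∈ V := h'.subset (by simp)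
      have hb : b ∈ V := h'.subset (by simp)
      have hca : c ≠ a := fun e => hc (e ▸ ha)
      have hcb : c ≠ b := fun e => hc (e ▸ hb)
      rw [List.idxOf_cons_ne _ hca, List.idxOf_cons_ne _ hcb]
      exact Nat.succ_lt_succ (ih hV' h')
    | cons_cons _ h' =>
      have hb : b ∈ V := h'.subset (by simp)
      have hab : a ≠ b := fun e => hc (e ▸ hb)
      rw [List.idxOf_cons_self, List.idxOf_cons_ne _ hab]
      exact Nat.succ_pos _

private lemma pair_mem {α : Type*} {a b : α} {u w : List α} (ha : a ∈ u) (hb : b ∈ w) :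
    List.Sublist [a, b] (u ++ w) :=
  (List.singleton_sublist.mpr ha).append (List.singleton_sublist.mpr hb)

private lemma no_dup {α : Type*} {e : α} {V : List α} (hV : V.Nodup)
    (h : List.Sublist [e, e] V) : False := by
  classical
  exact absurd (pair_lt hV h) (lt_irrefl _)

private lemma no_cycle {α : Type*} {a b d : α} {V : List α} (hV : V.Nodup)
    (h1 : List.Sublist [a, b] V) (h2 : List.Sublist [b, d] V)
    (h3 : List.Sublist [d, a] V) : False := by
  classical
  have t1 := pair_lt hV h1
  have t2 := pair_lt hV h2
  have t3 := pair_lt hV h3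
  omega

private lemma of_sublist {α : Type*} {x V : List α} (h : x.Sublist V) :
    ∃ v v' : List α, V = v ++ v' ∧ x.Sublist (v' ++ v) :=
  ⟨V, [], (List.append_nil V).symm, by simpa using h⟩

private lemma of_swap {α : Type*} {u w V : List α} (h : (u ++ w).Sublist V) :
    ∃ v v' : List α, V = v ++ v' ∧ (w ++ u).Sublist (v' ++ v) := by
  obtain ⟨v, v', rfl, hu, hw⟩ := List.append_sublist_iff.mp h
  exact ⟨v, v', rfl, hw.append hu⟩

/-- `x² ∈ ↓(V³)` iff `x` is a subword of a conjugate of `V`, for `V` with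
pairwise distinct letters. -/
theorem sqrt_dcl_cube_iff_conjugate {α : Type*} (V : List α) (hV : V.Nodup)
    (x : List α) :
    (x ++ x) ∈ dcl {V ++ V ++ V} ↔
      ∃ v v' : List α, V = v ++ v' ∧ x.Sublist (v' ++ v) := by
  constructor
  · rintro ⟨y, hy, hsub⟩
    rw [Set.mem_singleton_iff] at hy
    subst hy
    rw [List.append_assoc, List.sublist_append_iff] at hsub
    obtain ⟨p, q, hpq, hp, hq⟩ := hsub
    have hppre : p <+: x ++ x := ⟨q, hpq.symm⟩
    by_cases hlen : x.length ≤ p.length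
    · -- x is a prefix of p, hence x <+ V
      have hx : x <+: p :=
        List.prefix_of_prefix_length_le (List.prefix_append x x) hppre hlen
      exact of_sublist (hx.sublist.trans hp)
    · push_neg at hlen
      obtain ⟨r, rfl⟩ : p <+: x :=
        List.prefix_of_prefix_length_le hppre (List.prefix_append x x) hlen.le
      have hqr : q = r ++ (p ++ r) := by
        have h1 : p ++ q = p ++ (r ++ (p ++ r)) := by
          simpa [List.append_assoc] using hpq.symm
        exact List.append_cancel_left h1
      subst hqr
      rw [List.sublist_append_iff] at hq
      obtain ⟨s, t, hst, hs, ht⟩ := hq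
      have hspre : s <+: r ++ (p ++ r) := ⟨t, hst.symm⟩
      by_cases hlen2 : s.length ≤ r.length
      · -- s is a prefix of r; x is a suffix of t, hence x <+ V
        obtain ⟨u, rfl⟩ : s <+: r :=
          List.prefix_of_prefix_length_le hspre (List.prefix_append r (p ++ r)) hlen2
        have htu : t = u ++ (p ++ (s ++ u)) := by
          have h1 : s ++ t = s ++ (u ++ (p ++ (s ++ u))) := by
            simpa [List.append_assoc] using hst.symm
          exact List.append_cancel_left h1
        subst htu
        exact of_sublist ((List.sublist_append_right u _).trans ht)
      · push_neg at hlen2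
        obtain ⟨m, rfl⟩ : r <+: s :=
          List.prefix_of_prefix_length_le (List.prefix_append r (p ++ r)) hspre hlen2.le
        have hmt : p ++ r = m ++ t := by
          have h1 : r ++ (p ++ r) = r ++ (m ++ t) := by
            simpa [List.append_assoc] using hst
          exact List.append_cancel_left h1
        -- hp : p <+ V, hs : r ++ m <+ V, ht : t <+ V, x = p ++ r = m ++ t
        by_cases hlen3 : p.length ≤ m.length
        · obtain ⟨c, rfl⟩ : p <+: m :=
            List.prefix_of_prefix_length_le ⟨r, rfl⟩ ⟨t, hmt.symm⟩ hlen3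
          have hrct : r = c ++ t := by
            have h1 : p ++ r = p ++ (c ++ t) := by
              simpa [List.append_assoc] using hmt
            exact List.append_cancel_left h1
          subst hrct
          -- hs : (c ++ t) ++ (p ++ c) <+ V ; if c ≠ [] we get a repeated letter
          rcases c with _ | ⟨e, c'⟩
          · -- c = [] : x = p ++ t and t ++ p <+ V
            have hs' : (t ++ p).Sublist V := by simpa using hs
            obtain ⟨v, v', hv, hx⟩ := of_swap hs'
            exact ⟨v, v', hv, by simpa using hx⟩
          · exact (no_dup hV
              ((pair_mem (a := e) (b := e)
                (List.mem_append_left t ((List.mem_cons_self (a := e) (l := c'))))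
                (List.mem_append_right p ((List.mem_cons_self (a := e) (l := c'))))).trans hs)).elim
        · push_neg at hlen3
          obtain ⟨c, rfl⟩ : m <+: p :=
            List.prefix_of_prefix_length_le ⟨t, hmt.symm⟩ ⟨r, rfl⟩ hlen3.le
          have htcr : t = c ++ r := by
            have h1 : m ++ t = m ++ (c ++ r) := by
              simpa [List.append_assoc] using hmt.symm
            exact List.append_cancel_left h1
          subst htcr
          -- hp : m ++ c <+ V, ht : c ++ r <+ V, hs : r ++ m <+ V, x = m ++ c ++ r
          rcases m with _ | ⟨a, m'⟩
          · -- m = [] : x = c ++ r = t <+ V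
            have ht' : (([] : List α) ++ c ++ r).Sublist V := by simpa using ht
            exact of_sublist ht'
          rcases c with _ | ⟨b, c'⟩
          · -- c = [] : x = m ++ r, r ++ m <+ V
            obtain ⟨v, v', hv, hx⟩ := of_swap hs
            exact ⟨v, v', hv, by simpa using hx⟩
          rcases r with _ | ⟨d, r'⟩
          · -- r = [] : x = m ++ c = p <+ V
            exact of_sublist (by simpa using hp)
          · exact (no_cycle hV
              ((pair_mem (a := a) (b := b) ((List.mem_cons_self (a := a) (l := m')))
                ((List.mem_cons_self (a := b) (l := c')))).trans hp)
              ((pair_mem (a := b) (b := d) ((List.mem_cons_self (a := b) (l := c')))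
                ((List.mem_cons_self (a := d) (l := r')))).trans ht)
              ((pair_mem (a := d) (b := a) ((List.mem_cons_self (a := d) (l := r')))
                ((List.mem_cons_self (a := a) (l := m')))).trans hs)).elim
  · rintro ⟨v, v', rfl, hx⟩
    refine ⟨(v ++ v') ++ (v ++ v') ++ (v ++ v'), rfl, ?_⟩
    have h1 : (x ++ x).Sublist ((v' ++ v) ++ (v' ++ v)) := hx.append hx
    have h2 : ((v' ++ v) ++ (v' ++ v)).Sublist (v ++ (((v' ++ v) ++ (v' ++ v)) ++ v')) :=
      (List.sublist_append_left _ v').trans (List.sublist_append_right v _)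
    have heq : (v ++ v') ++ (v ++ v') ++ (v ++ v')
        = v ++ (((v' ++ v) ++ (v' ++ v)) ++ v') := by
      simp [List.append_assoc]
    rw [heq]
    exact h1.trans h2
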